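/- Let J be a countably generated ideal on ℕ and A = (A_{n,k}) a matrix of linear operators between Banach spaces X, Y satisfying: (a) lim_k ‖A_{n,≥k}‖ = 0 for every n (tails of group norms of each row vanish); (b) J-lim_n A_{n,k} x = 0 for every k ∈ ℕ and x ∈ X; and (c) J-limsup_n ‖A_{n,≥f(n)}‖ = ∞, where f(n) is any index with ‖A_{n,≥f(n)}‖ < ∞. Then there exists a sequence x with values in the unit sphere of X such that J-limsup_n ‖A_n x‖ = ∞. -/

import Mathlib

open Filter ENNReal

/-- The group norm of a family `(T k : k ∈ E)` of operators. -/
noncomputable def gn {X Y : Type*} [NormedAddCommGroup X] [NormedAddCommGroup Y]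
    (T : ℕ → X → Y) (E : Set ℕ) : ℝ≥0∞ :=
  ⨆ (F : Finset ℕ) (_ : (F : Set ℕ) ⊆ E) (x : ℕ → X) (_ : ∀ k, ‖x k‖ ≤ 1),
    (‖∑ k ∈ F, T k (x k)‖₊ : ℝ≥0∞)

/-- The `J`-limit superior of an `ℝ≥0∞`-valued sequence. -/
noncomputable def jlimsup (J : Set (Set ℕ)) (y : ℕ → ℝ≥0∞) : ℝ≥0∞ :=
  sInf {r : ℝ≥0∞ | {n | r ≤ y n} ∈ J}

section helpers
variable {X Y : Type*} [NormedAddCommGroup X] [NormedAddCommGroup Y]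

lemma le_gn (T : ℕ → X → Y) {E : Set ℕ} {F : Finset ℕ} (hF : (F : Set ℕ) ⊆ E)
    (x : ℕ → X) (hx : ∀ k, ‖x k‖ ≤ 1) :
    (‖∑ k ∈ F, T k (x k)‖₊ : ℝ≥0∞) ≤ gn T E := by
  refine le_trans ?_ (le_iSup _ F)
  refine le_trans ?_ (le_iSup _ hF)
  refine le_trans ?_ (le_iSup _ x)
  exact le_iSup (fun _ : ∀ k, ‖x k‖ ≤ 1 => (‖∑ k ∈ F, T k (x k)‖₊ : ℝ≥0∞)) hx

lemma gn_mono (T : ℕ → X → Y) {E E' : Set ℕ} (h : E ⊆ E') : gn T E ≤ gn T E' := by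
  refine iSup_le fun F => iSup_le fun hF => iSup_le fun x => iSup_le fun hx => ?_
  exact le_gn T (hF.trans h) x hx

lemma gn_union_le (T : ℕ → X → Y) (E1 E2 : Set ℕ) :
    gn T (E1 ∪ E2) ≤ gn T E1 + gn T E2 := by
  classical
  refine iSup_le fun F => iSup_le fun hF => iSup_le fun x => iSup_le fun hx => ?_
  have hsplit : ∑ k ∈ F, T k (x k)
      = ∑ k ∈ F.filter (· ∈ E1), T k (x k) + ∑ k ∈ F.filter (¬ · ∈ E1), T k (x k) :=
    (Finset.sum_filter_add_sum_filter_not F _ _).symm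
  calc (‖∑ k ∈ F, T k (x k)‖₊ : ℝ≥0∞)
      ≤ (‖∑ k ∈ F.filter (· ∈ E1), T k (x k)‖₊ : ℝ≥0∞)
        + (‖∑ k ∈ F.filter (¬ · ∈ E1), T k (x k)‖₊ : ℝ≥0∞) := by
        rw [hsplit]; exact_mod_cast nnnorm_add_le _ _
    _ ≤ gn T E1 + gn T E2 := by
        refine add_le_add (le_gn T ?_ x hx) (le_gn T ?_ x hx)
        · intro k hk; simp only [Finset.coe_filter, Set.mem_setOf_eq] at hk; exact hk.2
        · intro k hk; simp only [Finset.coe_filter, Set.mem_setOf_eq] at hk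
          rcases hF hk.1 with h1 | h2
          · exact absurd h1 hk.2
          · exact h2

end helpers

section unitvec
variable {X Y : Type*} [NormedAddCommGroup X] [NormedSpace ℝ X]
  [NormedAddCommGroup Y] [NormedSpace ℝ Y]

lemma exists_unit_single {e : X} (he : ‖e‖ = 1) (L : X →ₗ[ℝ] Y) (z : Y)
    {v0 : X} (h : ‖v0‖ ≤ 1) : ∃ v : X, ‖v‖ = 1 ∧ ‖z + L v0‖ ≤ ‖z + L v‖ := by
  have hcont : ∀ s : X, Continuous fun t : ℝ => ‖s + t • e‖ :=
    fun s => (continuous_const.add (continuous_id.smul continuous_const)).norm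
  have h2 : ∀ s : X, ‖s‖ ≤ 1 → (1 : ℝ) ≤ ‖s + (2:ℝ) • e‖ := by
    intro s hs
    have h0 := norm_sub_norm_le ((2:ℝ) • e) (-s)
    rw [sub_neg_eq_add, norm_neg, norm_smul, he, Real.norm_ofNat, mul_one] at h0
    rw [add_comm]
    linarith
  have ivt : ∀ s : X, ‖s‖ ≤ 1 → ∃ t : ℝ, 0 ≤ t ∧ ‖s + t • e‖ = 1 := by
    intro s hs
    have hsub : Set.Icc (‖s + (0:ℝ) • e‖) (‖s + (2:ℝ) • e‖) ⊆
        (fun t : ℝ => ‖s + t • e‖) '' Set.Icc 0 2 :=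
      intermediate_value_Icc (by norm_num) (hcont s).continuousOn
    have h1mem : (1:ℝ) ∈ Set.Icc (‖s + (0:ℝ) • e‖) (‖s + (2:ℝ) • e‖) := by
      constructor
      · simpa using hs
      · exact h2 s hs
    obtain ⟨t, ht, htv⟩ := hsub h1mem
    exact ⟨t, ht.1, htv⟩
  obtain ⟨t, ht0, ht⟩ := ivt v0 h
  obtain ⟨s, hs0, hs⟩ := ivt (-v0) (by simpa using h)
  set u := v0 + t • e with hu
  set w := v0 - s • e with hw
  have hun : ‖u‖ = 1 := ht
  have hwn : ‖w‖ = 1 := by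
    have : w = -(-v0 + s • e) := by rw [hw]; abel
    rw [this, norm_neg]; exact hs
  rcases eq_or_lt_of_le (add_nonneg hs0 ht0) with heq | hpos
  · have hs' : s = 0 := by linarith [hs0, ht0, heq.symm]
    have ht' : t = 0 := by linarith [hs0, ht0, heq.symm]
    refine ⟨v0, ?_, le_rfl⟩
    have hvu : ‖v0‖ = ‖u‖ := by rw [hu, ht', zero_smul, add_zero]
    rw [hvu]; exact hun
  · have key : v0 = ((s / (s + t)) • u) + ((t / (s + t)) • w) := by
      have hne : s + t ≠ 0 := ne_of_gt hpos
      rw [hu, hw]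
      match_scalars
      · field_simp
      · field_simp
        ring
    have hz : (s / (s + t)) • z + (t / (s + t)) • z = z := by
      rw [← add_smul]
      have h1 : s / (s + t) + t / (s + t) = 1 := by field_simp
      rw [h1, one_smul]
    have hLv : L v0 = (s / (s + t)) • L u + (t / (s + t)) • L w := by
      rw [key]; simp [map_add, map_smul]
    have hzkey : z + L v0 = (s / (s + t)) • (z + L u) + (t / (s + t)) • (z + L w) := by
      calc z + L v0 = z + ((s / (s + t)) • L u + (t / (s + t)) • L w) := by rw [hLv]
        _ = ((s / (s + t)) • z + (t / (s + t)) • z)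
            + ((s / (s + t)) • L u + (t / (s + t)) • L w) := by rw [hz]
        _ = (s / (s + t)) • (z + L u) + (t / (s + t)) • (z + L w) := by
            rw [smul_add, smul_add]; abel
    have hα : 0 ≤ s / (s + t) := div_nonneg hs0 (le_of_lt hpos)
    have hβ : 0 ≤ t / (s + t) := div_nonneg ht0 (le_of_lt hpos)
    have hαβ : s / (s + t) + t / (s + t) = 1 := by field_simp
    rcases le_total ‖z + L u‖ ‖z + L w‖ with hc | hc
    · refine ⟨w, hwn, ?_⟩
      calc ‖z + L v0‖ ≤ (s/(s+t)) * ‖z + L u‖ + (t/(s+t)) * ‖z + L w‖ := by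
            rw [hzkey]
            refine (norm_add_le _ _).trans ?_
            rw [norm_smul, norm_smul, Real.norm_eq_abs, abs_of_nonneg hα,
              Real.norm_eq_abs, abs_of_nonneg hβ]
        _ ≤ (s/(s+t)) * ‖z + L w‖ + (t/(s+t)) * ‖z + L w‖ := by
            gcongr
        _ = ‖z + L w‖ := by rw [← add_mul, hαβ, one_mul]
    · refine ⟨u, hun, ?_⟩
      calc ‖z + L v0‖ ≤ (s/(s+t)) * ‖z + L u‖ + (t/(s+t)) * ‖z + L w‖ := by
            rw [hzkey]
            refine (norm_add_le _ _).trans ?_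
            rw [norm_smul, norm_smul, Real.norm_eq_abs, abs_of_nonneg hα,
              Real.norm_eq_abs, abs_of_nonneg hβ]
        _ ≤ (s/(s+t)) * ‖z + L u‖ + (t/(s+t)) * ‖z + L u‖ := by
            gcongr
        _ = ‖z + L u‖ := by rw [← add_mul, hαβ, one_mul]

lemma exists_unit_aux {e : X} (he : ‖e‖ = 1) (T : ℕ → X →ₗ[ℝ] Y) (F : Finset ℕ) :
    ∀ (x : ℕ → X), (∀ k, ‖x k‖ ≤ 1) → ∀ (w : Y),
    ∃ u : ℕ → X, (∀ k, ‖u k‖ = 1) ∧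
      ‖w + ∑ k ∈ F, T k (x k)‖ ≤ ‖w + ∑ k ∈ F, T k (u k)‖ := by
  classical
  induction F using Finset.induction_on with
  | empty =>
    intro x hx w
    exact ⟨fun _ => e, fun _ => he, by simp⟩
  | @insert a s ha ih =>
    intro x hx w
    obtain ⟨u, hu, hle⟩ := ih x hx (w + T a (x a))
    obtain ⟨v, hv, hle2⟩ := exists_unit_single he (T a) (w + ∑ k ∈ s, T k (u k)) (hx a)
    refine ⟨Function.update u a v, ?_, ?_⟩
    · intro k
      rcases eq_or_ne k a with rfl | hk
      · rw [Function.update_self]; exact hv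
      · rw [Function.update_of_ne hk]; exact hu k
    · have hsum : ∑ k ∈ s, T k (Function.update u a v k) = ∑ k ∈ s, T k (u k) :=
        Finset.sum_congr rfl fun k hk => by
          rw [Function.update_of_ne (by rintro rfl; exact ha hk)]
      rw [Finset.sum_insert ha, Finset.sum_insert ha, hsum, Function.update_self]
      calc ‖w + (T a (x a) + ∑ k ∈ s, T k (x k))‖
          = ‖w + T a (x a) + ∑ k ∈ s, T k (x k)‖ := by rw [add_assoc]
        _ ≤ ‖w + T a (x a) + ∑ k ∈ s, T k (u k)‖ := hle
        _ = ‖(w + ∑ k ∈ s, T k (u k)) + T a (x a)‖ := by congr 1; abel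
        _ ≤ ‖(w + ∑ k ∈ s, T k (u k)) + T a v‖ := hle2
        _ = ‖w + (T a v + ∑ k ∈ s, T k (u k))‖ := by congr 1; abel

lemma exists_unit {e : X} (he : ‖e‖ = 1) (T : ℕ → X →ₗ[ℝ] Y) (F : Finset ℕ)
    (x : ℕ → X) (hx : ∀ k, ‖x k‖ ≤ 1) :
    ∃ u : ℕ → X, (∀ k, ‖u k‖ = 1) ∧
      ‖∑ k ∈ F, T k (x k)‖ ≤ ‖∑ k ∈ F, T k (u k)‖ := by
  obtain ⟨u, hu, hle⟩ := exists_unit_aux he T F x hx 0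
  exact ⟨u, hu, by simpa using hle⟩

lemma op_bound (L : X →ₗ[ℝ] Y) {c : ℝ} (h : ∀ x : X, ‖x‖ ≤ 1 → ‖L x‖ ≤ c) :
    ∀ x : X, ‖L x‖ ≤ c * ‖x‖ := by
  intro x
  rcases eq_or_ne x 0 with rfl | hx
  · simp
  · have hn : (0:ℝ) < ‖x‖ := norm_pos_iff.mpr hx
    have h1 : ‖(‖x‖⁻¹ • x : X)‖ ≤ 1 := by
      rw [norm_smul, Real.norm_eq_abs, abs_of_nonneg (by positivity)]
      rw [inv_mul_cancel₀ (ne_of_gt hn)]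
    have := h _ h1
    rw [map_smul, norm_smul, Real.norm_eq_abs, abs_of_nonneg (by positivity)] at this
    have h2 : ‖x‖⁻¹ * ‖L x‖ ≤ c := this
    calc ‖L x‖ = ‖x‖ * (‖x‖⁻¹ * ‖L x‖) := by field_simp
      _ ≤ ‖x‖ * c := mul_le_mul_of_nonneg_left h2 (le_of_lt hn)
      _ = c * ‖x‖ := mul_comm _ _

end unitvec

/-- If `J` is countably generated, each row of `A` has vanishing tail group norms, every
column of `A` converges to `0` strongly along `J`, and the `J`-limsup of the finite tail
group norms `‖A_{n, ≥ f n}‖` is infinite, then there is a unit-sphere-valued sequence `x`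
with `J`-limsup `‖A_n x‖ = ∞`. -/
theorem stmt18 {X Y : Type*} [NormedAddCommGroup X] [NormedSpace ℝ X] [CompleteSpace X]
    [NormedAddCommGroup Y] [NormedSpace ℝ Y] [CompleteSpace Y]
    (J : Set (Set ℕ))
    (hJ_sub : ∀ S S' : Set ℕ, S ∈ J → S' ⊆ S → S' ∈ J)
    (hJ_union : ∀ S S' : Set ℕ, S ∈ J → S' ∈ J → S ∪ S' ∈ J)
    (hJ_fin : ∀ S : Set ℕ, S.Finite → S ∈ J)
    (hJ_proper : Set.univ ∉ J)
    (hcg : ∃ Q : ℕ → Set ℕ, ∀ S : Set ℕ, S ∈ J ↔ ∃ F : Finset ℕ, S ⊆ ⋃ j ∈ F, Q j)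
    (A : ℕ → ℕ → X →ₗ[ℝ] Y)
    (htail : ∀ n, Tendsto (fun k => gn (fun j x => A n j x) {j | k ≤ j}) atTop (nhds 0))
    (hcol : ∀ (k : ℕ) (x : X), ∀ ε : ℝ, 0 < ε → {n | ε ≤ ‖A n k x‖} ∈ J)
    (f : ℕ → ℕ)
    (hf : ∀ n, gn (fun j x => A n j x) {j | f n ≤ j} < ⊤)
    (hinf : jlimsup J (fun n => gn (fun j x => A n j x) {j | f n ≤ j}) = ⊤) :
    ∃ x : ℕ → X, (∀ k, ‖x k‖ = 1) ∧
      ∃ y : ℕ → Y,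
        (∀ n, Tendsto (fun m => ∑ k ∈ Finset.range m, A n k (x k)) atTop (nhds (y n))) ∧
        jlimsup J (fun n => (‖y n‖₊ : ℝ≥0∞)) = ⊤ := by
  classical
  obtain ⟨Q, hQ⟩ := hcg
  set GG : ℕ → Set ℕ := fun m => ⋃ j ∈ Finset.range (m+1), Q j with hGG
  have memJ : ∀ S : Set ℕ, S ∈ J ↔ ∃ m, S ⊆ GG m := by
    intro S
    constructor
    · intro hS
      obtain ⟨F, hF⟩ := (hQ S).mp hS
      refine ⟨F.sup id, hF.trans ?_⟩
      refine Set.biUnion_subset_biUnion_left ?_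
      intro j hj
      have h1 : j ≤ F.sup id := Finset.le_sup (f := id) (by exact hj)
      show j ∈ Finset.range (F.sup id + 1)
      exact Finset.mem_range.mpr (by omega)
    · rintro ⟨m, hm⟩
      exact (hQ S).mpr ⟨Finset.range (m+1), hm⟩
  have GGmono : ∀ {m m' : ℕ}, m ≤ m' → GG m ⊆ GG m' := by
    intro m m' h
    refine Set.biUnion_subset_biUnion_left ?_
    intro j hj
    have hj' : j ∈ Finset.range (m + 1) := hj
    show j ∈ Finset.range (m' + 1)
    rw [Finset.mem_range] at hj' ⊢
    omega
  have notJ : ∀ S : Set ℕ, S ∉ J → ∀ m, ∃ n, n ∈ S ∧ n ∉ GG m := by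
    intro S hS m
    by_contra hcon
    push_neg at hcon
    exact hS ((memJ S).mpr ⟨m, fun n hn => hcon n hn⟩)
  have hbig : ∀ r : ℝ≥0∞, r ≠ ⊤ →
      {n | r ≤ gn (fun j x => A n j x) {j | f n ≤ j}} ∉ J := by
    intro r hr hmem
    have h1 : jlimsup J (fun n => gn (fun j x => A n j x) {j | f n ≤ j}) ≤ r := sInf_le hmem
    rw [hinf] at h1
    exact hr (top_le_iff.mp h1)
  -- ball bounds for columns beyond f n
  have hball : ∀ n k, f n ≤ k → ∀ x : X, ‖x‖ ≤ 1 →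
      ‖A n k x‖ ≤ (gn (fun j x => A n j x) {j | f n ≤ j}).toReal := by
    intro n k hk x hx
    have h1 : (‖A n k x‖₊ : ℝ≥0∞) ≤ gn (fun j x => A n j x) {j | f n ≤ j} := by
      have := le_gn (fun j x => A n j x) (F := {k}) (E := {j | f n ≤ j})
        (by intro j hj; simp only [Finset.coe_singleton, Set.mem_singleton_iff] at hj
            subst hj; exact hk) (fun _ => x) (fun _ => hx)
      simpa using this
    have h2 := ENNReal.toReal_mono (ne_of_lt (hf n)) h1
    simpa using h2
  -- existence of a unit vector
  have hexe : ∃ e : X, ‖e‖ = 1 := by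
    obtain ⟨n, hn, -⟩ := notJ _ (hbig 1 one_ne_top) 0
    have h0 : (0:ℝ≥0∞) < gn (fun j x => A n j x) {j | f n ≤ j} :=
      lt_of_lt_of_le zero_lt_one hn
    rw [gn] at h0
    simp only [lt_iSup_iff] at h0
    obtain ⟨F, hF, x, hx, hval⟩ := h0
    have hex : ∃ k ∈ F, x k ≠ 0 := by
      by_contra hcon
      push_neg at hcon
      have hz : ∑ k ∈ F, A n k (x k) = 0 :=
        Finset.sum_eq_zero fun k hk => by rw [hcon k hk, map_zero]
      rw [hz] at hval
      simp at hval
    obtain ⟨k, -, hk⟩ := hex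
    refine ⟨‖x k‖⁻¹ • x k, ?_⟩
    rw [norm_smul, Real.norm_eq_abs, abs_of_nonneg (by positivity),
      inv_mul_cancel₀ (norm_ne_zero_iff.mpr hk)]
  obtain ⟨e, he⟩ := hexe
  -- uniform column bounds via Banach–Steinhaus
  have claim_col : ∀ k : ℕ, ∃ (m : ℕ) (c : ℝ), ∀ n, n ∉ GG m → f n ≤ k →
      ∀ x : X, ‖x‖ ≤ 1 → ‖A n k x‖ ≤ c := by
    intro k
    by_contra hcon
    push_neg at hcon
    choose nn hn1 hn2 xx hx1 hx2 using fun i : ℕ => hcon i i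
    set T : ℕ → X →L[ℝ] Y := fun i =>
      LinearMap.mkContinuous (A (nn i) k) _
        (op_bound _ (hball (nn i) k (hn2 i))) with hT
    have hpt : ∀ x : X, ∃ C : ℝ, ∀ i, ‖T i x‖ ≤ C := by
      intro x
      obtain ⟨m0, hm0⟩ := (memJ _).mp (hcol k x 1 one_pos)
      refine ⟨1 + ∑ j ∈ Finset.range m0, ‖A (nn j) k x‖, fun i => ?_⟩
      have hTi : ‖T i x‖ = ‖A (nn i) k x‖ := rfl
      rcases lt_or_ge i m0 with hi | hi
      · have h1 : ‖A (nn i) k x‖ ≤ ∑ j ∈ Finset.range m0, ‖A (nn j) k x‖ :=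
          Finset.single_le_sum (f := fun j => ‖A (nn j) k x‖) (fun j _ => norm_nonneg _) (Finset.mem_range.mpr hi)
        rw [hTi]; linarith
      · have h2 : nn i ∉ GG m0 := fun h => hn1 i (GGmono hi h)
        have h3 : ¬ (1 : ℝ) ≤ ‖A (nn i) k x‖ := fun h => h2 (hm0 h)
        push_neg at h3
        have h4 : (0:ℝ) ≤ ∑ j ∈ Finset.range m0, ‖A (nn j) k x‖ :=
          Finset.sum_nonneg fun j _ => norm_nonneg _
        rw [hTi]; linarith
    obtain ⟨C', hC'⟩ := banach_steinhaus hpt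
    obtain ⟨i, hi⟩ := exists_nat_gt C'
    have h5 : ‖A (nn i) k (xx i)‖ ≤ C' := by
      have h6 : ‖T i (xx i)‖ ≤ ‖T i‖ * ‖xx i‖ := (T i).le_opNorm _
      have h7 : ‖T i‖ * ‖xx i‖ ≤ C' * 1 :=
        mul_le_mul (hC' i) (hx1 i) (norm_nonneg _) ((norm_nonneg (T i)).trans (hC' i))
      have hTi : ‖T i (xx i)‖ = ‖A (nn i) k (xx i)‖ := rfl
      rw [← hTi]; linarith
    have h8 := hx2 i
    have : (i : ℝ) < C' := lt_of_lt_of_le h8 h5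
    linarith
  have claim_window : ∀ K : ℕ, ∃ (m : ℕ) (C : ℝ), 0 ≤ C ∧ ∀ n, n ∉ GG m →
      gn (fun j x => A n j x) {j | f n ≤ j ∧ j < K} ≤ ENNReal.ofReal C := by
    intro K
    choose m c hmc using claim_col
    refine ⟨(Finset.range K).sup m, ∑ k ∈ Finset.range K, max (c k) 0,
      Finset.sum_nonneg fun k _ => le_max_right _ _, ?_⟩
    intro n hn
    refine iSup_le fun F => iSup_le fun hF => iSup_le fun x => iSup_le fun hx => ?_
    have hFK : F ⊆ Finset.range K := by
      intro k hk
      exact Finset.mem_range.mpr (hF hk).2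
    have hnorm : ‖∑ k ∈ F, A n k (x k)‖ ≤ ∑ k ∈ Finset.range K, max (c k) 0 := by
      calc ‖∑ k ∈ F, A n k (x k)‖ ≤ ∑ k ∈ F, ‖A n k (x k)‖ := norm_sum_le _ _
        _ ≤ ∑ k ∈ F, max (c k) 0 := by
            refine Finset.sum_le_sum fun k hk => ?_
            have hk' := hF hk
            have hnm : n ∉ GG (m k) :=
              fun h => hn (GGmono (Finset.le_sup (Finset.mem_range.mpr hk'.2)) h)
            exact le_max_of_le_left (hmc k n hnm hk'.1 (x k) (hx k))
        _ ≤ ∑ k ∈ Finset.range K, max (c k) 0 :=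
            Finset.sum_le_sum_of_subset_of_nonneg hFK fun k _ _ => le_max_right _ _
    rw [← ((ofReal_norm _).trans (enorm_eq_nnnorm _))]
    exact ENNReal.ofReal_le_ofReal hnorm
  have colsmall : ∀ (K : ℕ) (v : ℕ → X), ∃ m : ℕ, ∀ n, n ∉ GG m →
      ‖∑ k ∈ Finset.range K, A n k (v k)‖ ≤ 1 := by
    intro K v
    have hS : ∀ k : ℕ, ∃ m : ℕ, {n | ((K:ℝ)+1)⁻¹ ≤ ‖A n k (v k)‖} ⊆ GG m := fun k =>
      (memJ _).mp (hcol k (v k) _ (by positivity))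
    choose mk hmk using hS
    refine ⟨(Finset.range K).sup mk, fun n hn => ?_⟩
    have hterm : ∀ k ∈ Finset.range K, ‖A n k (v k)‖ ≤ ((K:ℝ)+1)⁻¹ := by
      intro k hk
      by_contra hcon
      push_neg at hcon
      exact hn (GGmono (Finset.le_sup hk) (hmk k (le_of_lt hcon)))
    calc ‖∑ k ∈ Finset.range K, A n k (v k)‖
        ≤ ∑ k ∈ Finset.range K, ‖A n k (v k)‖ := norm_sum_le _ _
      _ ≤ ∑ _k ∈ Finset.range K, ((K:ℝ)+1)⁻¹ := Finset.sum_le_sum hterm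
      _ = (K:ℝ) * ((K:ℝ)+1)⁻¹ := by
          rw [Finset.sum_const, Finset.card_range, nsmul_eq_mul]
      _ ≤ 1 := by
          rw [mul_inv_le_iff₀ (by positivity), one_mul]
          linarith
  -- the gliding-hump step
  have step : ∀ (i K : ℕ) (v : ℕ → X), (∀ k, ‖v k‖ = 1) →
      ∃ (K' : ℕ) (v' : ℕ → X) (n : ℕ), K < K' ∧ (∀ k, ‖v' k‖ = 1) ∧
        (∀ k, k < K → v' k = v k) ∧ n ∉ GG i ∧
        ((i : ℝ) + 2 ≤ ‖∑ k ∈ Finset.range K', A n k (v' k)‖) ∧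
        gn (fun j x => A n j x) {j | K' ≤ j} ≤ 1 := by
    intro i K v hv
    obtain ⟨m1, C, hC0, hwin⟩ := claim_window K
    obtain ⟨m2, hm2⟩ := colsmall K v
    set r : ℝ≥0∞ := ((i:ℝ≥0∞) + 4) + ENNReal.ofReal C with hr
    have hrne : r ≠ ⊤ := by
      rw [hr]
      exact ENNReal.add_ne_top.mpr ⟨ENNReal.add_ne_top.mpr
        ⟨ENNReal.natCast_ne_top i, by norm_num⟩, ENNReal.ofReal_ne_top⟩
    obtain ⟨n, hnS, hnG⟩ := notJ _ (hbig r hrne) (max i (max m1 m2))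
    have hniG : n ∉ GG i := fun h => hnG (GGmono (le_max_left _ _) h)
    have hn1 : n ∉ GG m1 :=
      fun h => hnG (GGmono ((le_max_left m1 m2).trans (le_max_right i _)) h)
    have hn2 : n ∉ GG m2 :=
      fun h => hnG (GGmono ((le_max_right m1 m2).trans (le_max_right i _)) h)
    have hnS' : r ≤ gn (fun j x => A n j x) {j | f n ≤ j} := hnS
    have hsplit : gn (fun j x => A n j x) {j | f n ≤ j}
        ≤ ENNReal.ofReal C + gn (fun j x => A n j x) {j | K ≤ j} := by
      have hsub : {j | f n ≤ j} ⊆ {j | f n ≤ j ∧ j < K} ∪ {j | K ≤ j} := by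
        intro j hj
        rcases lt_or_ge j K with h | h
        · exact Or.inl ⟨hj, h⟩
        · exact Or.inr h
      calc gn (fun j x => A n j x) {j | f n ≤ j}
          ≤ gn (fun j x => A n j x) ({j | f n ≤ j ∧ j < K} ∪ {j | K ≤ j}) :=
            gn_mono _ hsub
        _ ≤ gn (fun j x => A n j x) {j | f n ≤ j ∧ j < K}
            + gn (fun j x => A n j x) {j | K ≤ j} := gn_union_le _ _ _
        _ ≤ ENNReal.ofReal C + gn (fun j x => A n j x) {j | K ≤ j} := by
            gcongr
            exact hwin n hn1
    have hKbig : (i:ℝ≥0∞) + 4 ≤ gn (fun j x => A n j x) {j | K ≤ j} := by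
      have h1 : ((i:ℝ≥0∞) + 4) + ENNReal.ofReal C
          ≤ gn (fun j x => A n j x) {j | K ≤ j} + ENNReal.ofReal C := by
        rw [add_comm (gn _ _) _]
        exact le_trans hnS' hsplit
      exact (ENNReal.add_le_add_iff_right ENNReal.ofReal_ne_top).mp h1
    obtain ⟨k0, hk0⟩ := Filter.eventually_atTop.mp
      ((htail n).eventually_lt_const (by norm_num : (0:ℝ≥0∞) < 1))
    have hlt : ((i:ℝ≥0∞) + 3) < gn (fun j x => A n j x) {j | K ≤ j} := by
      refine lt_of_lt_of_le ?_ hKbig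
      have : ((3:ℝ≥0∞)) < 4 := by norm_num
      exact ENNReal.add_lt_add_left (ENNReal.natCast_ne_top i) this
    rw [gn] at hlt
    simp only [lt_iSup_iff] at hlt
    obtain ⟨F, hF, x, hx, hval⟩ := hlt
    have hval' : (i:ℝ) + 3 < ‖∑ k ∈ F, A n k (x k)‖ := by
      have h1 : ENNReal.ofReal ((i:ℝ) + 3)
          < ENNReal.ofReal ‖∑ k ∈ F, A n k (x k)‖ := by
        rw [((ofReal_norm _).trans (enorm_eq_nnnorm _))]
        convert hval using 1
        rw [ENNReal.ofReal_add (by positivity) (by norm_num)]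
        simp [ENNReal.ofReal_natCast]
      exact (ENNReal.ofReal_lt_ofReal_iff_of_nonneg (by positivity)).mp h1
    set K' : ℕ := max k0 (max (K+1) (F.sup id + 1)) with hK'
    have hKK' : K < K' := lt_of_lt_of_le (Nat.lt_succ_self K)
      ((le_max_left _ _).trans (le_max_right _ _))
    have hFbl : F ⊆ Finset.Ico K K' := by
      intro k hk
      refine Finset.mem_Ico.mpr ⟨hF hk, ?_⟩
      have : k ≤ F.sup id := Finset.le_sup (f := id) hk
      omega
    set xt : ℕ → X := fun k => if k ∈ F then x k else 0 with hxt
    have hxt1 : ∀ k, ‖xt k‖ ≤ 1 := by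
      intro k
      rw [hxt]
      dsimp only
      split
      · exact hx k
      · simp
    have hsum_eq : ∑ k ∈ Finset.Ico K K', A n k (xt k) = ∑ k ∈ F, A n k (x k) := by
      rw [← Finset.sum_subset hFbl (fun k _ hk => by
        rw [hxt]; dsimp only; rw [if_neg hk, map_zero])]
      exact Finset.sum_congr rfl fun k hk => by rw [hxt]; dsimp only; rw [if_pos hk]
    obtain ⟨u, hu, hule⟩ := exists_unit he (A n) (Finset.Ico K K') xt hxt1
    set v' : ℕ → X := fun k => if k < K then v k else u k with hv'
    have hv'unit : ∀ k, ‖v' k‖ = 1 := by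
      intro k
      rw [hv']
      dsimp only
      split
      · exact hv k
      · exact hu k
    have hv'eq : ∀ k, k < K → v' k = v k := by
      intro k hk
      rw [hv']
      dsimp only
      rw [if_pos hk]
    have hsum2 : ∑ k ∈ Finset.range K', A n k (v' k)
        = ∑ k ∈ Finset.range K, A n k (v k) + ∑ k ∈ Finset.Ico K K', A n k (u k) := by
      rw [Finset.range_eq_Ico, ← Finset.sum_Ico_consecutive _ (Nat.zero_le K) (le_of_lt hKK')]
      congr 1
      · rw [← Finset.range_eq_Ico]
        exact Finset.sum_congr rfl fun k hk => by
          rw [hv'eq k (Finset.mem_range.mp hk)]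
      · refine Finset.sum_congr rfl fun k hk => ?_
        have hkK : ¬ k < K := not_lt.mpr (Finset.mem_Ico.mp hk).1
        rw [hv']
        dsimp only
        rw [if_neg hkK]
    refine ⟨K', v', n, hKK', hv'unit, hv'eq, hniG, ?_, ?_⟩
    · -- norm lower bound
      have hbig2 : (i:ℝ) + 3 < ‖∑ k ∈ Finset.Ico K K', A n k (u k)‖ := by
        calc (i:ℝ) + 3 < ‖∑ k ∈ F, A n k (x k)‖ := hval'
          _ = ‖∑ k ∈ Finset.Ico K K', A n k (xt k)‖ := by rw [hsum_eq]
          _ ≤ ‖∑ k ∈ Finset.Ico K K', A n k (u k)‖ := hule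
      have hsm : ‖∑ k ∈ Finset.range K, A n k (v k)‖ ≤ 1 := hm2 n hn2
      have htri := norm_sub_norm_le (∑ k ∈ Finset.Ico K K', A n k (u k))
        (-(∑ k ∈ Finset.range K, A n k (v k)))
      rw [norm_neg, sub_neg_eq_add] at htri
      have heq2 : ‖∑ k ∈ Finset.range K, A n k (v k) + ∑ k ∈ Finset.Ico K K', A n k (u k)‖
          = ‖∑ k ∈ Finset.Ico K K', A n k (u k) + ∑ k ∈ Finset.range K, A n k (v k)‖ := by
        rw [add_comm]
      rw [hsum2, heq2]
      linarith
    · -- tail bound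
      have h1 := hk0 K' ((le_max_left _ _))
      exact le_of_lt h1
  -- recursive construction
  have step' : ∀ (i : ℕ) (p : {q : ℕ × (ℕ → X) × ℕ // ∀ k, ‖q.2.1 k‖ = 1}),
      ∃ p' : {q : ℕ × (ℕ → X) × ℕ // ∀ k, ‖q.2.1 k‖ = 1},
        p.1.1 < p'.1.1 ∧ (∀ k, k < p.1.1 → p'.1.2.1 k = p.1.2.1 k) ∧ p'.1.2.2 ∉ GG i ∧
        ((i:ℝ) + 2 ≤ ‖∑ k ∈ Finset.range p'.1.1, A p'.1.2.2 k (p'.1.2.1 k)‖) ∧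
        gn (fun j x => A p'.1.2.2 j x) {j | p'.1.1 ≤ j} ≤ 1 := by
    rintro i ⟨⟨K, v, n0⟩, hp⟩
    obtain ⟨K', v', n, h1, h2, h3, h4, h5, h6⟩ := step i K v hp
    exact ⟨⟨⟨K', v', n⟩, h2⟩, h1, h3, h4, h5, h6⟩
  let seq : ℕ → {q : ℕ × (ℕ → X) × ℕ // ∀ k, ‖q.2.1 k‖ = 1} :=
    fun i => Nat.rec ⟨⟨0, fun _ => e, 0⟩, fun _ => he⟩
      (fun i p => Classical.choose (step' i p)) i
  have hseq : ∀ i : ℕ,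
      (seq i).1.1 < (seq (i+1)).1.1 ∧
      (∀ k, k < (seq i).1.1 → (seq (i+1)).1.2.1 k = (seq i).1.2.1 k) ∧
      (seq (i+1)).1.2.2 ∉ GG i ∧
      ((i:ℝ) + 2 ≤ ‖∑ k ∈ Finset.range (seq (i+1)).1.1,
        A (seq (i+1)).1.2.2 k ((seq (i+1)).1.2.1 k)‖) ∧
      gn (fun j x => A (seq (i+1)).1.2.2 j x) {j | (seq (i+1)).1.1 ≤ j} ≤ 1 :=
    fun i => Classical.choose_spec (step' i (seq i))
  set KK : ℕ → ℕ := fun i => (seq i).1.1 with hKK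
  set vv : ℕ → ℕ → X := fun i => (seq i).1.2.1 with hvv
  set nr : ℕ → ℕ := fun i => (seq (i+1)).1.2.2 with hnr
  have hK0 : KK 0 = 0 := rfl
  have hKmono : StrictMono KK := strictMono_nat_of_lt_succ fun i => (hseq i).1
  have hKi : ∀ i, i ≤ KK i := by
    intro i
    induction i with
    | zero => exact Nat.zero_le _
    | succ j ih => exact Nat.succ_le_of_lt (lt_of_le_of_lt ih (hseq j).1)
  have hcoh : ∀ i j, i ≤ j → ∀ k, k < KK i → vv j k = vv i k := by
    intro i j hij
    induction j, hij using Nat.le_induction with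
    | base => intro k _; rfl
    | succ j hij ih =>
      intro k hk
      have h1 : k < KK j := lt_of_lt_of_le hk (hKmono.monotone hij)
      have h2 : vv (j+1) k = vv j k := (hseq j).2.1 k h1
      rw [h2]
      exact ih k hk
  set xx : ℕ → X := fun k => vv (k+1) k with hxx0
  have hxunit : ∀ k, ‖xx k‖ = 1 := fun k => (seq (k+1)).2 k
  have hxx : ∀ j k, k < KK j → xx k = vv j k := by
    intro j k hk
    have hk1 : k < KK (k+1) := lt_of_lt_of_le (Nat.lt_succ_self k) (hKi (k+1))
    rcases le_total (k+1) j with h | h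
    · rw [hxx0]
      dsimp only
      rw [hcoh (k+1) j h k hk1]
    · rw [hxx0]
      dsimp only
      rw [hcoh j (k+1) h k hk]
  -- convergence of the series
  have hconv : ∀ n, ∃ yn : Y,
      Tendsto (fun m => ∑ k ∈ Finset.range m, A n k (xx k)) atTop (nhds yn) := by
    intro n
    have hc : CauchySeq (fun m => ∑ k ∈ Finset.range m, A n k (xx k)) := by
      rw [Metric.cauchySeq_iff']
      intro ε hε
      obtain ⟨N, hN⟩ := Filter.eventually_atTop.mp
        ((htail n).eventually_lt_const (ENNReal.ofReal_pos.mpr hε))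
      refine ⟨N, fun m hm => ?_⟩
      rw [dist_eq_norm]
      have hdiff : ∑ k ∈ Finset.range m, A n k (xx k)
          - ∑ k ∈ Finset.range N, A n k (xx k)
          = ∑ k ∈ Finset.Ico N m, A n k (xx k) := by
        rw [Finset.sum_Ico_eq_sub _ hm]
      rw [hdiff]
      have hb := le_gn (fun j x => A n j x) (F := Finset.Ico N m) (E := {j | N ≤ j})
        (by intro k hk
            simp only [Finset.coe_Ico, Set.mem_Ico] at hk
            exact hk.1)
        xx (fun k => le_of_eq (hxunit k))
      have hlt := lt_of_le_of_lt hb (hN N le_rfl)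
      rw [← ((ofReal_norm _).trans (enorm_eq_nnnorm _))] at hlt
      exact (ENNReal.ofReal_lt_ofReal_iff hε).mp hlt
    exact cauchySeq_tendsto_of_complete hc
  choose y hy using hconv
  -- lower bound along selected rows
  have hylow : ∀ i : ℕ, (i:ℝ) + 1 ≤ ‖y (nr i)‖ := by
    intro i
    set n := nr i with hn
    set P : Y := ∑ k ∈ Finset.range (KK (i+1)), A n k (xx k) with hP
    have hPval : (i:ℝ) + 2 ≤ ‖P‖ := by
      have h1 := (hseq i).2.2.2.1
      have h2 : ∑ k ∈ Finset.range (KK (i+1)), A n k (vv (i+1) k) = P := by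
        rw [hP]
        exact Finset.sum_congr rfl fun k hk =>
          by rw [hxx (i+1) k (Finset.mem_range.mp hk)]
      rw [← h2]
      exact h1
    have htail1 : ∀ m, KK (i+1) ≤ m →
        ‖∑ k ∈ Finset.range m, A n k (xx k) - P‖ ≤ 1 := by
      intro m hm
      have hdiff : ∑ k ∈ Finset.range m, A n k (xx k) - P
          = ∑ k ∈ Finset.Ico (KK (i+1)) m, A n k (xx k) := by
        rw [hP, Finset.sum_Ico_eq_sub _ hm]
      rw [hdiff]
      have hb := le_gn (fun j x => A n j x) (F := Finset.Ico (KK (i+1)) m)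
        (E := {j | KK (i+1) ≤ j})
        (by intro k hk
            simp only [Finset.coe_Ico, Set.mem_Ico] at hk
            exact hk.1)
        xx (fun k => le_of_eq (hxunit k))
      have h3 := le_trans hb ((hseq i).2.2.2.2)
      rw [← ((ofReal_norm _).trans (enorm_eq_nnnorm _))] at h3
      have h4 := ENNReal.ofReal_le_one.mp h3
      exact h4
    have hlim : Tendsto (fun m => ‖∑ k ∈ Finset.range m, A n k (xx k) - P‖)
        atTop (nhds ‖y n - P‖) := ((hy n).sub tendsto_const_nhds).norm
    have hyP : ‖y n - P‖ ≤ 1 :=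
      le_of_tendsto hlim (Filter.eventually_atTop.mpr ⟨KK (i+1), htail1⟩)
    have htri := norm_sub_norm_le P (P - y n)
    have hPy : ‖P - (P - y n)‖ = ‖y n‖ := by congr 1; abel
    have hPy2 : ‖P - y n‖ = ‖y n - P‖ := norm_sub_rev _ _
    rw [hPy, hPy2] at htri
    linarith
  refine ⟨xx, hxunit, y, hy, ?_⟩
  rw [jlimsup]
  refine le_antisymm le_top (le_sInf fun r hr => ?_)
  by_contra hrt
  push_neg at hrt
  obtain ⟨m, hm⟩ := (memJ _).mp hr
  obtain ⟨N, hN⟩ := ENNReal.exists_nat_gt hrt.ne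
  set i := max m N with hi
  have hni : nr i ∉ GG m := fun h =>
    (hseq i).2.2.1 (GGmono (le_max_left _ _) h)
  have hyi : r ≤ (‖y (nr i)‖₊ : ℝ≥0∞) := by
    have h1 : (N:ℝ) ≤ ‖y (nr i)‖ := by
      have h2 := hylow i
      have h3 : (N:ℝ) ≤ (i:ℝ) + 1 := by
        have : N ≤ i := le_max_right m N
        exact_mod_cast Nat.le_succ_of_le this
      linarith
    calc r ≤ (N:ℝ≥0∞) := le_of_lt hN
      _ ≤ (‖y (nr i)‖₊ : ℝ≥0∞) := by
          rw [← ENNReal.ofReal_natCast, ← ((ofReal_norm _).trans (enorm_eq_nnnorm _))]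
          exact ENNReal.ofReal_le_ofReal h1
  exact hni (hm hyi)
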